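/- Let (X, •, 1) be a commutative monoid and U ⊆ X a subset such that no element of U divides 1. Then the PCM over X induced by U, namely (X|_U, •_U, {1}), is a partial commutative monoid: (i) 1 ∈ X|_U and x •_U 1 = x for every x ∈ X|_U; (ii) •_U is commutative; (iii) •_U is associative in the Kleene sense: for all x, y, z ∈ X|_U, the composite (x •_U y) •_U z is defined iff x •_U (y •_U z) is defined, and when defined both sides equal x • y • z. -/

import Mathlib

/- The induced partial composition on `X|_U`: `x •_U y = x * y` if `x * y ∈ X|_U`,
undefined otherwise. -/
open Classical in
noncomputable def compU {M : Type*} [CommMonoid M] (U : Set M) (x y : M) : Option M :=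
  if ∀ u ∈ U, ¬ u ∣ x * y then some (x * y) else none

/-- The PCM over `X` induced by `U` is a partial commutative monoid, provided no
element of `U` divides `1`. -/
theorem induced_pcm {M : Type*} [CommMonoid M] (U : Set M)
    (hU : ∀ u ∈ U, ¬ u ∣ (1 : M)) :
    -- (i) 1 is in the carrier and is a unit
    ((1 : M) ∈ {z : M | ∀ u ∈ U, ¬ u ∣ z}) ∧
    (∀ x ∈ {z : M | ∀ u ∈ U, ¬ u ∣ z}, compU U x 1 = some x) ∧
    -- (ii) commutativity
    (∀ x ∈ {z : M | ∀ u ∈ U, ¬ u ∣ z}, ∀ y ∈ {z : M | ∀ u ∈ U, ¬ u ∣ z},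
      compU U x y = compU U y x) ∧
    -- (iii) Kleene associativity, with both sides equal to x * y * z when defined
    (∀ x ∈ {z : M | ∀ u ∈ U, ¬ u ∣ z}, ∀ y ∈ {z : M | ∀ u ∈ U, ¬ u ∣ z},
      ∀ z ∈ {w : M | ∀ u ∈ U, ¬ u ∣ w},
      (((compU U x y).bind fun w => compU U w z).isSome ↔
        ((compU U y z).bind fun w => compU U x w).isSome) ∧
      (((compU U x y).bind fun w => compU U w z).isSome →
        ((compU U x y).bind fun w => compU U w z) = some (x * y * z)) ∧
      (((compU U y z).bind fun w => compU U x w).isSome →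
        ((compU U y z).bind fun w => compU U x w) = some (x * y * z))) := by
  classical
  have hL : ∀ x y z : M, ((compU U x y).bind fun w => compU U w z) =
      if ∀ u ∈ U, ¬ u ∣ x * y * z then some (x * y * z) else none := by
    intro x y z
    simp only [compU]
    by_cases h : ∀ u ∈ U, ¬ u ∣ x * y * z
    · have hxy : ∀ u ∈ U, ¬ u ∣ x * y := fun u hu hd =>
        h u hu (hd.trans (dvd_mul_right _ _))
      rw [if_pos hxy, Option.bind_some, if_pos h]
    · by_cases hxy : ∀ u ∈ U, ¬ u ∣ x * y
      · rw [if_pos hxy, Option.bind_some, if_neg h]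
      · rw [if_neg hxy, Option.bind_none, if_neg h]
  have hR : ∀ x y z : M, ((compU U y z).bind fun w => compU U x w) =
      if ∀ u ∈ U, ¬ u ∣ x * y * z then some (x * y * z) else none := by
    intro x y z
    simp only [compU]
    by_cases h : ∀ u ∈ U, ¬ u ∣ x * y * z
    · have h' : ∀ u ∈ U, ¬ u ∣ x * (y * z) := by simpa [mul_assoc] using h
      have hyz : ∀ u ∈ U, ¬ u ∣ y * z := fun u hu hd =>
        h' u hu (hd.trans (dvd_mul_left (y * z) x))
      rw [if_pos hyz, Option.bind_some, if_pos h', if_pos h, mul_assoc]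
    · have h' : ¬ ∀ u ∈ U, ¬ u ∣ x * (y * z) := by simpa [mul_assoc] using h
      by_cases hyz : ∀ u ∈ U, ¬ u ∣ y * z
      · rw [if_pos hyz, Option.bind_some, if_neg h', if_neg h]
      · rw [if_neg hyz, Option.bind_none, if_neg h]
  refine ⟨hU, ?_, ?_, ?_⟩
  · intro x hx
    have hx1 : ∀ u ∈ U, ¬ u ∣ x * 1 := by simpa using hx
    simp only [compU]
    rw [if_pos hx1, mul_one]
  · intro x _ y _
    simp only [compU, mul_comm x y]
  · intro x _ y _ z _
    rw [hL, hR]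
    by_cases h : ∀ u ∈ U, ¬ u ∣ x * y * z <;> simp [h]
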